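/- Let A = C*(x_1,...,x_n) be a finitely generated unital MF C*-algebra. If K_top^(2)(x_1,...,x_n) = 0 (this value being independent of the generating tuple), then K_top^(3)(A) = 0. -/

import Mathlib

set_option maxHeartbeats 1000000
set_option synthInstance.maxHeartbeats 400000


noncomputable section

open Filter Set
open scoped BigOperators ComplexOrder

namespace OrbitDim

/-- `k × k` complex matrices. -/
abbrev Mat (k : ℕ) := Matrix (Fin k) (Fin k) ℂ

/-- The operator norm of a complex matrix, i.e. the norm of the operator it induces
on the euclidean space `ℂ^k`. -/
def opNorm {k : ℕ} (M : Mat k) : ℝ := ‖Matrix.toEuclideanCLM (𝕜 := ℂ) M‖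

/-- The square of the normalized Hilbert–Schmidt norm `‖M‖₂² = τ_k(M*M)`. -/
def hsNormSq {k : ℕ} (M : Mat k) : ℝ := (k : ℝ)⁻¹ * ∑ s, ∑ t, ‖M s t‖ ^ 2

/-- The normalized Hilbert–Schmidt norm `‖M‖₂ = τ_k(M*M)^{1/2}`. -/
def hsNorm {k : ℕ} (M : Mat k) : ℝ := Real.sqrt (hsNormSq M)

/-- `‖·‖₂` of a tuple of matrices. -/
def tupleHS {ι : Type*} [Fintype ι] {k : ℕ} (T : ι → Mat k) : ℝ :=
  Real.sqrt (∑ i, hsNormSq (T i))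

/-- The normalized trace `τ_k = (1/k) Tr`. -/
def normalizedTrace {k : ℕ} (M : Mat k) : ℂ := (k : ℂ)⁻¹ * Matrix.trace M

/-- Noncommutative *-polynomials in variables indexed by `ι`: elements of the free
`ℂ`-algebra on `ι ⊕ ι`, the second copy of `ι` standing for the starred variables. -/
abbrev StarPoly (ι : Type*) := FreeAlgebra ℂ (ι ⊕ ι)

/-- Evaluation of a *-polynomial at a tuple `x`, the second copy of the variables being
evaluated at `star (x i)`. -/
def evalPoly {ι : Type*} {B : Type*} [Ring B] [Algebra ℂ B] [Star B]
    (P : StarPoly ι) (x : ι → B) : B :=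
  FreeAlgebra.lift ℂ (Sum.elim x fun i => star (x i)) P

/-- The `ω`-orbit-`‖·‖₂`-ball centered at a tuple `B` of `k × k` matrices. -/
def orbitBall {ι : Type*} [Fintype ι] {k : ℕ} (B : ι → Mat k) (ω : ℝ) :
    Set (ι → Mat k) :=
  {T | ∃ W : Mat k, W ∈ unitary (Mat k) ∧
    tupleHS (fun i => T i - W * B i * star W) < ω}

/-- The covering number `o₂(S, ω)`: the minimal number of `ω`-orbit-`‖·‖₂`-balls with
centers in `S` needed to cover `S` (`⊤` if there is no finite such cover). -/
def o2 {ι : Type*} [Fintype ι] {k : ℕ} (S : Set (ι → Mat k)) (ω : ℝ) : ℕ∞ :=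
  sInf {n : ℕ∞ | ∃ F : Finset (ι → Mat k),
    ↑F ⊆ S ∧ S ⊆ (⋃ B ∈ F, orbitBall B ω) ∧ n = (F.card : ℕ∞)}

/-- Logarithm of an extended natural number, valued in the extended reals. -/
def elog (n : ℕ∞) : EReal :=
  WithTop.recTopCoe ⊤ (fun m : ℕ => ((Real.log m : ℝ) : EReal)) n

/-- The convention `∞ ⬝ 0 = 0` and `∞ ⬝ t = ∞` for `t > 0`. -/
def infMul (x : EReal) : EReal := if x = 0 then 0 else ⊤

variable {A : Type*} [CStarAlgebra A]

/-- Voiculescu's norm-microstate space `Γ_R^{top}(x₁,…,xₙ; k, ε, P₁,…,P_r)`: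
self-adjoint `k × k` matrices `T i` of operator norm at most `R` such that
`| ‖P_j(T)‖ - ‖P_j(x)‖ | ≤ ε` for each `j`. -/
def Gamma {ι : Type*} [Fintype ι] (x : ι → A) (R : ℝ) (k : ℕ) (ε : ℝ)
    {r : ℕ} (P : Fin r → StarPoly ι) : Set (ι → Mat k) :=
  {T | (∀ i, IsSelfAdjoint (T i)) ∧ (∀ i, opNorm (T i) ≤ R) ∧
    ∀ j, |opNorm (evalPoly (P j) T) - ‖evalPoly (P j) x‖| ≤ ε}

/-- Norm-microstate space of `x` in the presence of `y`: the projection onto the first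
coordinates of the microstate space of the joint tuple. -/
def GammaRel {ι κ : Type*} [Fintype ι] [Fintype κ] (x : ι → A) (y : κ → A)
    (R : ℝ) (k : ℕ) (ε : ℝ) {r : ℕ} (P : Fin r → StarPoly (ι ⊕ κ)) :
    Set (ι → Mat k) :=
  (fun T : ι ⊕ κ → Mat k => T ∘ Sum.inl) '' Gamma (Sum.elim x y) R k ε P

/-- Topological orbit dimension `K_top^{(2)}(x : y)` of a (self-adjoint) tuple `x`
in the presence of `y`. -/
def Ktop2sa {ι κ : Type*} [Fintype ι] [Fintype κ] (x : ι → A) (y : κ → A) : EReal :=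
  ⨆ (ω : ℝ) (_ : 0 < ω) (R : ℝ) (_ : 0 < R),
    ⨅ (ε : ℝ) (_ : 0 < ε) (r : ℕ) (P : Fin r → StarPoly (ι ⊕ κ)),
      limsup (fun k : ℕ =>
        elog (o2 (GammaRel x y R k ε P) ω) * ((((k : ℝ) ^ 2)⁻¹ : ℝ) : EReal)) atTop

/-- The tuple of real and imaginary parts of a tuple of elements. -/
def reim {ι : Type*} (x : ι → A) : ι ⊕ ι → A :=
  Sum.elim (fun i => (2⁻¹ : ℂ) • (x i + star (x i)))
    (fun i => ((2 * Complex.I)⁻¹ : ℂ) • (x i - star (x i)))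

/-- Topological orbit dimension `K_top^{(2)}(x : y)` for arbitrary tuples, obtained by
applying the self-adjoint version to the real and imaginary parts. -/
def Ktop2 {ι κ : Type*} [Fintype ι] [Fintype κ] (x : ι → A) (y : κ → A) : EReal :=
  Ktop2sa (reim x) (reim y)

/-- `K_top^{(3)}(G)` for a subset `G` of a C*-algebra. -/
def Ktop3 (G : Set A) : EReal :=
  ⨆ (n : ℕ) (x : Fin n → A) (_ : ∀ i, x i ∈ G),
    ⨅ (t : ℕ) (y : Fin t → A) (_ : ∀ j, y j ∈ G), infMul (Ktop2 x y)

/-- The C*-subalgebra generated by a subset: the topological closure of the star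
subalgebra generated by it. -/
def cstar (s : Set A) : StarSubalgebra ℂ A :=
  (StarAlgebra.adjoin ℂ s).topologicalClosure

/-- The tuple `x` admits matricial microstates: there are matrices realizing the norms of
all *-polynomials in `x` asymptotically; i.e. `C*(x)` is an MF algebra. -/
def IsMFTuple {ι : Type*} [Fintype ι] (x : ι → A) : Prop :=
  ∃ (m : ℕ → ℕ) (T : ∀ k, ι → Mat (m k)), (∀ k, 0 < m k) ∧
    ∀ Q : StarPoly ι,
      Tendsto (fun k => opNorm (evalPoly Q (T k))) atTop (nhds ‖evalPoly Q x‖)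

/-- A unital C*-algebra is MF if it admits a unital isometric embedding into
`∏ₖ M_{m_k}(ℂ) / ∑ₖ M_{m_k}(ℂ)`, expressed here by an asymptotically multiplicative,
asymptotically star-linear, asymptotically unital family of maps into matrices which is
isometric with respect to the quotient (limsup) norm. -/
def IsMF (A : Type*) [CStarAlgebra A] : Prop :=
  ∃ (m : ℕ → ℕ) (Φ : A → ∀ k, Mat (m k)),
    (∀ k, 0 < m k) ∧
    (∀ a b : A, Tendsto (fun k => opNorm (Φ (a + b) k - Φ a k - Φ b k)) atTop (nhds 0)) ∧
    (∀ a b : A, Tendsto (fun k => opNorm (Φ (a * b) k - Φ a k * Φ b k)) atTop (nhds 0)) ∧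
    (∀ (c : ℂ) (a : A), Tendsto (fun k => opNorm (Φ (c • a) k - c • Φ a k)) atTop (nhds 0)) ∧
    (∀ a : A, Tendsto (fun k => opNorm (Φ (star a) k - star (Φ a k))) atTop (nhds 0)) ∧
    Tendsto (fun k => opNorm (Φ 1 k - 1)) atTop (nhds 0) ∧
    ∀ a : A, limsup (fun k => opNorm (Φ a k)) atTop = ‖a‖

/-- A tracial state on a unital C*-algebra: a positive unital linear functional which is
tracial. -/
def IsTracialState (τ : A → ℂ) : Prop :=
  (∀ a b : A, τ (a + b) = τ a + τ b) ∧ (∀ (c : ℂ) (a : A), τ (c • a) = c * τ a) ∧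
  τ 1 = 1 ∧ (∀ a : A, 0 ≤ τ (star a * a)) ∧ ∀ a b : A, τ (a * b) = τ (b * a)

/-- An MF-trace (with respect to the generating tuple `x`): a tracial state which is a
limit of normalized matrix traces along microstates realizing the norms of all
*-polynomials in `x`. -/
def IsMFTrace {ι : Type*} [Fintype ι] (x : ι → A) (τ : A → ℂ) : Prop :=
  IsTracialState τ ∧
  ∃ (m : ℕ → ℕ) (T : ∀ k, ι → Mat (m k)), (∀ k, 0 < m k) ∧
    (∀ Q : StarPoly ι,
      Tendsto (fun k => opNorm (evalPoly Q (T k))) atTop (nhds ‖evalPoly Q x‖)) ∧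
    (∀ Q : StarPoly ι,
      Tendsto (fun k => normalizedTrace (evalPoly Q (T k))) atTop (nhds (τ (evalPoly Q x))))

/-- The product of the letters of a word. -/
def wordProd {M : Type*} [Monoid M] {ι : Type*} {q : ℕ} (x : ι → M) (w : Fin q → ι) : M :=
  (List.ofFn fun j => x (w j)).prod

/-- Tracial microstate space `Γ_R(x; m, k, ε; τ)`: self-adjoint matrices of norm at most
`R` whose normalized trace on every word of length at most `m` is `ε`-close to `τ` on the
corresponding word in `x`. -/
def GammaTr {ι : Type*} [Fintype ι] (x : ι → A) (τ : A → ℂ) (R : ℝ) (m k : ℕ) (ε : ℝ) :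
    Set (ι → Mat k) :=
  {T | (∀ i, IsSelfAdjoint (T i)) ∧ (∀ i, opNorm (T i) ≤ R) ∧
    ∀ q : ℕ, 1 ≤ q → q ≤ m → ∀ w : Fin q → ι,
      ‖normalizedTrace (wordProd T w) - τ (wordProd x w)‖ < ε}

/-- Tracial microstate space of `x` in the presence of `y`. -/
def GammaTrRel {ι κ : Type*} [Fintype ι] [Fintype κ] (x : ι → A) (y : κ → A) (τ : A → ℂ)
    (R : ℝ) (m k : ℕ) (ε : ℝ) : Set (ι → Mat k) :=
  (fun T : ι ⊕ κ → Mat k => T ∘ Sum.inl) '' GammaTr (Sum.elim x y) τ R m k ε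

/-- The modified free orbit dimension `K₂^{(2)}(x : y; τ)` of a (self-adjoint) tuple. -/
def K22sa {ι κ : Type*} [Fintype ι] [Fintype κ] (x : ι → A) (y : κ → A) (τ : A → ℂ) :
    EReal :=
  limsup (fun ω : ℝ =>
      ⨆ (R : ℝ) (_ : 0 < R), ⨅ (m : ℕ) (ε : ℝ) (_ : 0 < ε),
        limsup (fun k : ℕ =>
          elog (o2 (GammaTrRel x y τ R m k ε) ω) * ((((k : ℝ) ^ 2)⁻¹ : ℝ) : EReal)) atTop)
    (nhdsWithin (0 : ℝ) (Ioi 0))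

/-- The modified free orbit dimension for arbitrary tuples, via real and imaginary
parts. -/
def K22 {ι κ : Type*} [Fintype ι] [Fintype κ] (x : ι → A) (y : κ → A) (τ : A → ℂ) :
    EReal :=
  K22sa (reim x) (reim y) τ

/-- `K₃^{(3)}(G : τ)`. -/
def K33 (G : Set A) (τ : A → ℂ) : EReal :=
  ⨆ (n : ℕ) (x : Fin n → A) (_ : ∀ i, x i ∈ G),
    ⨅ (t : ℕ) (y : Fin t → A) (_ : ∀ j, y j ∈ G), infMul (K22 x y τ)

/-- A (possibly non-unital) *-algebra has no finite-dimensional representations if the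
only *-homomorphism from it into a matrix algebra is zero. -/
def HasNoFinDimRep (B : Type*) [NonUnitalNonAssocSemiring B] [Module ℂ B] [Star B] : Prop :=
  ∀ (k : ℕ) (φ : B →⋆ₙₐ[ℂ] Mat k) (b : B), φ b = 0

end OrbitDim

namespace OrbitDim
set_option maxHeartbeats 1000000
set_option synthInstance.maxHeartbeats 400000
set_option linter.unusedSectionVars false

-- basic opNorm lemmas
theorem opNorm_nonneg {k : ℕ} (M : Mat k) : 0 ≤ opNorm M := norm_nonneg _

theorem opNorm_add_le {k : ℕ} (M N : Mat k) : opNorm (M + N) ≤ opNorm M + opNorm N := by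
  unfold opNorm; rw [map_add]; exact norm_add_le _ _

theorem opNorm_mul_le {k : ℕ} (M N : Mat k) : opNorm (M * N) ≤ opNorm M * opNorm N := by
  unfold opNorm; rw [map_mul]; exact norm_mul_le _ _

theorem opNorm_star {k : ℕ} (M : Mat k) : opNorm (star M) = opNorm M := by
  unfold opNorm; rw [map_star, ContinuousLinearMap.star_eq_adjoint]
  exact LinearIsometryEquiv.norm_map ContinuousLinearMap.adjoint _

theorem opNorm_one_le {k : ℕ} : opNorm (1 : Mat k) ≤ 1 := by
  unfold opNorm; rw [map_one]
  exact ContinuousLinearMap.norm_id_le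

theorem opNorm_smul {k : ℕ} (c : ℂ) (M : Mat k) : opNorm (c • M) = ‖c‖ * opNorm M := by
  unfold opNorm; rw [map_smul]; exact norm_smul c (Matrix.toEuclideanCLM (𝕜 := ℂ) M)

theorem opNorm_algebraMap_le {k : ℕ} (c : ℂ) : opNorm (algebraMap ℂ (Mat k) c) ≤ ‖c‖ := by
  rw [Algebra.algebraMap_eq_smul_one, opNorm_smul]
  calc ‖c‖ * opNorm (1 : Mat k) ≤ ‖c‖ * 1 :=
        mul_le_mul_of_nonneg_left opNorm_one_le (norm_nonneg c)
    _ = ‖c‖ := mul_one _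

theorem opNorm_unitary {k : ℕ} {U : Mat k} (hU : U ∈ unitary (Mat k)) : opNorm U ≤ 1 := by
  have h1 : star U * U = 1 := (Unitary.mem_iff.mp hU).1
  have : opNorm U ^ 2 ≤ 1 := by
    have hc : opNorm (star U * U) ≤ 1 := by rw [h1]; exact opNorm_one_le
    unfold opNorm at *
    rw [map_mul, map_star] at hc
    rwa [pow_two, ← CStarRing.norm_star_mul_self]
  nlinarith [opNorm_nonneg U]

theorem opNorm_conj_le {k : ℕ} {U : Mat k} (hU : U ∈ unitary (Mat k)) (M : Mat k) :
    opNorm (U * M * star U) ≤ opNorm M := by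
  calc opNorm (U * M * star U) ≤ opNorm (U * M) * opNorm (star U) := opNorm_mul_le _ _
    _ ≤ opNorm U * opNorm M * opNorm (star U) :=
        mul_le_mul_of_nonneg_right (opNorm_mul_le _ _) (opNorm_nonneg _)
    _ ≤ 1 * opNorm M * opNorm (star U) := by
        have h1 := opNorm_unitary hU
        exact mul_le_mul_of_nonneg_right
          (mul_le_mul_of_nonneg_right h1 (opNorm_nonneg M)) (opNorm_nonneg _)
    _ ≤ 1 * opNorm M * 1 := by
        have h2 : opNorm (star U) ≤ 1 := by rw [opNorm_star]; exact opNorm_unitary hU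
        exact mul_le_mul_of_nonneg_left h2 (by have := opNorm_nonneg M; linarith)
    _ = opNorm M := by ring


-- hsNorm machinery
section HS
variable {k : ℕ}

theorem hsNormSq_nonneg (M : Mat k) : 0 ≤ hsNormSq M := by
  unfold hsNormSq
  exact mul_nonneg (by positivity) (Finset.sum_nonneg fun s _ =>
    Finset.sum_nonneg fun t _ => by positivity)

theorem hsNorm_nonneg (M : Mat k) : 0 ≤ hsNorm M := Real.sqrt_nonneg _

theorem hsNormSq_eq_sq (M : Mat k) : hsNormSq M = hsNorm M ^ 2 := by
  rw [hsNorm, Real.sq_sqrt (hsNormSq_nonneg M)]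

/-- The matrix as a Euclidean vector. -/
def matVec (M : Mat k) : EuclideanSpace ℂ (Fin k × Fin k) :=
  (WithLp.equiv 2 _).symm (fun p => M p.1 p.2)

theorem matVec_add (A B : Mat k) : matVec (A + B) = matVec A + matVec B := rfl
theorem matVec_neg (A : Mat k) : matVec (-A) = -(matVec A) := rfl

theorem norm_matVec_sq (M : Mat k) : ‖matVec M‖ ^ 2 = ∑ s, ∑ t, ‖M s t‖ ^ 2 := by
  rw [EuclideanSpace.norm_eq, Real.sq_sqrt (Finset.sum_nonneg fun p _ => by positivity)]
  rw [Fintype.sum_prod_type]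
  rfl

theorem hsNorm_eq_matVec (M : Mat k) : hsNorm M = Real.sqrt (k : ℝ)⁻¹ * ‖matVec M‖ := by
  rw [hsNorm, hsNormSq, ← norm_matVec_sq, Real.sqrt_mul (by positivity),
    Real.sqrt_sq (norm_nonneg _)]

theorem hsNorm_add_le (A B : Mat k) : hsNorm (A + B) ≤ hsNorm A + hsNorm B := by
  rw [hsNorm_eq_matVec, hsNorm_eq_matVec, hsNorm_eq_matVec, matVec_add, ← mul_add]
  exact mul_le_mul_of_nonneg_left (norm_add_le _ _) (Real.sqrt_nonneg _)

theorem hsNorm_neg (A : Mat k) : hsNorm (-A) = hsNorm A := by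
  rw [hsNorm_eq_matVec, hsNorm_eq_matVec, matVec_neg, norm_neg]

theorem hsNorm_zero : hsNorm (0 : Mat k) = 0 := by
  simp [hsNorm, hsNormSq]

theorem hsNormSq_star (M : Mat k) : hsNormSq (star M) = hsNormSq M := by
  unfold hsNormSq
  congr 1
  rw [Finset.sum_comm]
  apply Finset.sum_congr rfl; intro s _
  apply Finset.sum_congr rfl; intro t _
  rw [Matrix.star_apply, norm_star]

theorem hsNorm_star (M : Mat k) : hsNorm (star M) = hsNorm M := by
  rw [hsNorm, hsNorm, hsNormSq_star]

/-- Columns of a matrix as Euclidean vectors. -/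
def matCol (M : Mat k) (t : Fin k) : EuclideanSpace ℂ (Fin k) :=
  (WithLp.equiv 2 _).symm (fun s => M s t)

theorem norm_matCol_sq (M : Mat k) (t : Fin k) : ‖matCol M t‖ ^ 2 = ∑ s, ‖M s t‖ ^ 2 := by
  rw [EuclideanSpace.norm_eq, Real.sq_sqrt (Finset.sum_nonneg fun s _ => by positivity)]
  rfl

theorem hsNormSq_eq_cols (M : Mat k) : hsNormSq M = (k : ℝ)⁻¹ * ∑ t, ‖matCol M t‖ ^ 2 := by
  unfold hsNormSq
  rw [Finset.sum_comm]
  congr 1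
  exact Finset.sum_congr rfl fun t _ => (norm_matCol_sq M t).symm

theorem matCol_mul (A B : Mat k) (t : Fin k) :
    matCol (A * B) t = Matrix.toEuclideanCLM (𝕜 := ℂ) A (matCol B t) := by
  unfold matCol
  rfl

theorem hsNorm_mul_le_left (A B : Mat k) : hsNorm (A * B) ≤ opNorm A * hsNorm B := by
  have key : hsNormSq (A * B) ≤ (opNorm A) ^ 2 * hsNormSq B := by
    rw [hsNormSq_eq_cols, hsNormSq_eq_cols]
    have hsum : ∑ t, ‖matCol (A * B) t‖ ^ 2 ≤ ∑ t, opNorm A ^ 2 * ‖matCol B t‖ ^ 2 :=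
      Finset.sum_le_sum fun t _ => by
        rw [matCol_mul]
        have h := ContinuousLinearMap.le_opNorm (Matrix.toEuclideanCLM (𝕜 := ℂ) A) (matCol B t)
        calc ‖Matrix.toEuclideanCLM (𝕜 := ℂ) A (matCol B t)‖ ^ 2
            ≤ (opNorm A * ‖matCol B t‖) ^ 2 := pow_le_pow_left₀ (norm_nonneg _) h 2
          _ = opNorm A ^ 2 * ‖matCol B t‖ ^ 2 := mul_pow _ _ _
    calc (k:ℝ)⁻¹ * ∑ t, ‖matCol (A * B) t‖ ^ 2
        ≤ (k:ℝ)⁻¹ * ∑ t, opNorm A ^ 2 * ‖matCol B t‖ ^ 2 :=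
          mul_le_mul_of_nonneg_left hsum (by positivity)
      _ = opNorm A ^ 2 * ((k:ℝ)⁻¹ * ∑ t, ‖matCol B t‖ ^ 2) := by
          rw [← Finset.mul_sum]; ring
  calc hsNorm (A * B) = Real.sqrt (hsNormSq (A * B)) := rfl
    _ ≤ Real.sqrt ((opNorm A) ^ 2 * hsNormSq B) := Real.sqrt_le_sqrt key
    _ = opNorm A * hsNorm B := by
        rw [Real.sqrt_mul (by positivity), Real.sqrt_sq (opNorm_nonneg A)]; rfl

theorem hsNorm_one_le : hsNorm (1 : Mat k) ≤ 1 := by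
  have h : hsNormSq (1 : Mat k) ≤ 1 := by
    unfold hsNormSq
    have : ∀ s : Fin k, ∑ t, ‖(1 : Mat k) s t‖ ^ 2 = 1 := by
      intro s
      have : ∀ t : Fin k, ‖(1 : Mat k) s t‖ ^ 2 = if s = t then 1 else 0 := by
        intro t
        by_cases hst : s = t <;> simp [Matrix.one_apply, hst]
      rw [Finset.sum_congr rfl fun t _ => this t, Finset.sum_ite_eq Finset.univ s fun _ => (1:ℝ)]
      simp
    rw [Finset.sum_congr rfl fun s _ => this s]
    simp
    rcases Nat.eq_zero_or_pos k with hk | hk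
    · simp [hk]
    · rw [inv_mul_cancel₀ (by positivity)]
  calc hsNorm (1 : Mat k) ≤ Real.sqrt 1 := Real.sqrt_le_sqrt h
    _ = 1 := Real.sqrt_one

theorem hsNorm_le_opNorm (M : Mat k) : hsNorm M ≤ opNorm M := by
  calc hsNorm M = hsNorm (M * 1) := by rw [mul_one]
    _ ≤ opNorm M * hsNorm 1 := hsNorm_mul_le_left M 1
    _ ≤ opNorm M * 1 := mul_le_mul_of_nonneg_left hsNorm_one_le (opNorm_nonneg M)
    _ = opNorm M := mul_one _

theorem hsNorm_mul_le_right (A B : Mat k) : hsNorm (A * B) ≤ hsNorm A * opNorm B := by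
  calc hsNorm (A * B) = hsNorm (star (A * B)) := (hsNorm_star _).symm
    _ = hsNorm (star B * star A) := by rw [star_mul]
    _ ≤ opNorm (star B) * hsNorm (star A) := hsNorm_mul_le_left _ _
    _ = hsNorm A * opNorm B := by rw [opNorm_star, hsNorm_star]; ring

theorem euclid_unitary {U : Mat k} (hU : U ∈ unitary (Mat k))
    (v : EuclideanSpace ℂ (Fin k)) : ‖Matrix.toEuclideanCLM (𝕜 := ℂ) U v‖ = ‖v‖ := by
  set u := Matrix.toEuclideanCLM (𝕜 := ℂ) U with hu
  have h1 : star u * u = 1 := by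
    rw [hu, ← map_star, ← map_mul, (Unitary.mem_iff.mp hU).1, map_one]
  have h2 : (inner ℂ (u v) (u v) : ℂ) = inner ℂ v v := by
    have h6 := ContinuousLinearMap.adjoint_inner_left (𝕜 := ℂ) u v (u v)
    rw [← ContinuousLinearMap.star_eq_adjoint] at h6
    have h3 : (star u) (u v) = v := by
      have h7 : (star u * u) v = (1 : EuclideanSpace ℂ (Fin k) →L[ℂ] EuclideanSpace ℂ (Fin k)) v := by
        rw [h1]
      simpa using h7
    rw [h3] at h6
    exact h6.symm
  have h4 := inner_self_eq_norm_sq_to_K (𝕜 := ℂ) (u v)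
  have h5 := inner_self_eq_norm_sq_to_K (𝕜 := ℂ) v
  rw [h2, h5] at h4
  have h8 : ‖v‖ ^ 2 = ‖u v‖ ^ 2 := by exact_mod_cast h4
  nlinarith [norm_nonneg (u v), norm_nonneg v]

theorem hsNorm_unitary_left {U : Mat k} (hU : U ∈ unitary (Mat k)) (M : Mat k) :
    hsNorm (U * M) = hsNorm M := by
  unfold hsNorm
  rw [hsNormSq_eq_cols, hsNormSq_eq_cols]
  congr 2
  exact Finset.sum_congr rfl fun t _ => by rw [matCol_mul, euclid_unitary hU]

theorem hsNorm_unitary_right {U : Mat k} (hU : U ∈ unitary (Mat k)) (M : Mat k) :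
    hsNorm (M * U) = hsNorm M := by
  calc hsNorm (M * U) = hsNorm (star (M * U)) := (hsNorm_star _).symm
    _ = hsNorm (star U * star M) := by rw [star_mul]
    _ = hsNorm (star M) := hsNorm_unitary_left (Unitary.star_mem hU) _
    _ = hsNorm M := hsNorm_star _

theorem hsNorm_conj {U : Mat k} (hU : U ∈ unitary (Mat k)) (M : Mat k) :
    hsNorm (U * M * star U) = hsNorm M := by
  rw [hsNorm_unitary_right (Unitary.star_mem hU), hsNorm_unitary_left hU]

theorem hsNormSq_conj {U : Mat k} (hU : U ∈ unitary (Mat k)) (M : Mat k) :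
    hsNormSq (U * M * star U) = hsNormSq M := by
  rw [hsNormSq_eq_sq, hsNormSq_eq_sq, hsNorm_conj hU]

end HS


-- tupleHS lemmas
section Tuple
variable {ι : Type*} [Fintype ι] {k : ℕ}

theorem tupleHS_nonneg (T : ι → Mat k) : 0 ≤ tupleHS T := Real.sqrt_nonneg _

theorem hsNorm_le_tupleHS (T : ι → Mat k) (i : ι) : hsNorm (T i) ≤ tupleHS T := by
  unfold hsNorm tupleHS
  exact Real.sqrt_le_sqrt (Finset.single_le_sum (fun j _ => hsNormSq_nonneg (T j))
    (Finset.mem_univ i))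

theorem tupleHS_le_sum (T : ι → Mat k) : tupleHS T ≤ ∑ i, hsNorm (T i) := by
  unfold tupleHS
  have h1 : ∑ i, hsNormSq (T i) ≤ (∑ i, hsNorm (T i)) ^ 2 := by
    calc ∑ i, hsNormSq (T i) = ∑ i, hsNorm (T i) ^ 2 :=
          Finset.sum_congr rfl fun i _ => hsNormSq_eq_sq (T i)
      _ ≤ (∑ i, hsNorm (T i)) ^ 2 :=
          Finset.sum_sq_le_sq_sum_of_nonneg fun i _ => hsNorm_nonneg (T i)
  calc Real.sqrt (∑ i, hsNormSq (T i)) ≤ Real.sqrt ((∑ i, hsNorm (T i)) ^ 2) :=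
        Real.sqrt_le_sqrt h1
    _ = ∑ i, hsNorm (T i) := Real.sqrt_sq (Finset.sum_nonneg fun i _ => hsNorm_nonneg (T i))

/-- The tuple as one big Euclidean vector. -/
def tupVec (T : ι → Mat k) : EuclideanSpace ℂ (ι × (Fin k × Fin k)) :=
  (WithLp.equiv 2 _).symm (fun p => T p.1 p.2.1 p.2.2)

theorem tupVec_add (A B : ι → Mat k) :
    tupVec (fun i => A i + B i) = tupVec A + tupVec B := rfl

theorem tupVec_neg (A : ι → Mat k) : tupVec (fun i => -(A i)) = -(tupVec A) := rfl

theorem tupleHS_eq_tupVec (T : ι → Mat k) :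
    tupleHS T = Real.sqrt (k : ℝ)⁻¹ * ‖tupVec T‖ := by
  unfold tupleHS
  have h : ‖tupVec T‖ ^ 2 = ∑ i, ∑ s, ∑ t, ‖T i s t‖ ^ 2 := by
    rw [EuclideanSpace.norm_eq, Real.sq_sqrt (Finset.sum_nonneg fun p _ => by positivity),
      Fintype.sum_prod_type]
    exact Finset.sum_congr rfl fun i _ => by rw [Fintype.sum_prod_type]; rfl
  have h2 : ∑ i, hsNormSq (T i) = (k : ℝ)⁻¹ * ∑ i, ∑ s, ∑ t, ‖T i s t‖ ^ 2 := by
    unfold hsNormSq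
    rw [Finset.mul_sum]
  rw [h2, ← h, Real.sqrt_mul (by positivity), Real.sqrt_sq (norm_nonneg _)]

theorem tupleHS_add_le (A B : ι → Mat k) :
    tupleHS (fun i => A i + B i) ≤ tupleHS A + tupleHS B := by
  rw [tupleHS_eq_tupVec, tupleHS_eq_tupVec, tupleHS_eq_tupVec, tupVec_add, ← mul_add]
  exact mul_le_mul_of_nonneg_left (norm_add_le _ _) (Real.sqrt_nonneg _)

theorem tupleHS_neg (A : ι → Mat k) : tupleHS (fun i => -(A i)) = tupleHS A := by
  rw [tupleHS_eq_tupVec, tupleHS_eq_tupVec, tupVec_neg, norm_neg]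

theorem tupleHS_conj {U : Mat k} (hU : U ∈ unitary (Mat k)) (T : ι → Mat k) :
    tupleHS (fun i => U * T i * star U) = tupleHS T := by
  unfold tupleHS
  congr 1
  exact Finset.sum_congr rfl fun i _ => hsNormSq_conj hU (T i)

theorem tupleHS_congr (A B : ι → Mat k) (h : ∀ i, A i = B i) : tupleHS A = tupleHS B := by
  congr 1; funext i; rw [h]

end Tuple

-- polynomial lemmas
section Poly
variable {ι κ : Type*} {B : Type*} [Ring B] [Algebra ℂ B] [StarRing B] [StarModule ℂ B]

theorem evalPoly_add (P Q : StarPoly ι) (v : ι → B) :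
    evalPoly (P + Q) v = evalPoly P v + evalPoly Q v := map_add _ _ _

theorem evalPoly_mul (P Q : StarPoly ι) (v : ι → B) :
    evalPoly (P * Q) v = evalPoly P v * evalPoly Q v := map_mul _ _ _

theorem evalPoly_sub (P Q : StarPoly ι) (v : ι → B) :
    evalPoly (P - Q) v = evalPoly P v - evalPoly Q v := map_sub _ _ _

theorem evalPoly_smul (c : ℂ) (P : StarPoly ι) (v : ι → B) :
    evalPoly (c • P) v = c • evalPoly P v := map_smul _ _ _

theorem evalPoly_algebraMap (c : ℂ) (v : ι → B) :
    evalPoly (algebraMap ℂ (StarPoly ι) c) v = algebraMap ℂ B c := AlgHom.commutes _ _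

theorem evalPoly_ι_left (i : ι) (v : ι → B) :
    evalPoly (FreeAlgebra.ι ℂ (Sum.inl i : ι ⊕ ι)) v = v i := by
  unfold evalPoly
  rw [FreeAlgebra.lift_ι_apply]
  rfl

/-- Renaming of variables in *-polynomials. -/
def ren (e : ι → κ) : StarPoly ι →ₐ[ℂ] StarPoly κ :=
  FreeAlgebra.lift ℂ (fun j => FreeAlgebra.ι ℂ (Sum.map e e j))

theorem evalPoly_ren (e : ι → κ) (P : StarPoly ι) (T : κ → B) :
    evalPoly (ren e P) T = evalPoly P (T ∘ e) := by
  have h : (FreeAlgebra.lift ℂ (Sum.elim T fun i => star (T i))).comp (ren e)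
      = FreeAlgebra.lift ℂ (Sum.elim (T ∘ e) fun i => star (T (e i))) := by
    apply FreeAlgebra.hom_ext
    funext j
    rcases j with i | i <;>
      simp [ren, FreeAlgebra.lift_ι_apply]
  calc evalPoly (ren e P) T
      = ((FreeAlgebra.lift ℂ (Sum.elim T fun i => star (T i))).comp (ren e)) P := rfl
    _ = FreeAlgebra.lift ℂ (Sum.elim (T ∘ e) fun i => star (T (e i))) P := by rw [h]
    _ = evalPoly P (T ∘ e) := rfl

end Poly

section Conj
variable {k : ℕ}

/-- Conjugation by a unitary as an algebra homomorphism. -/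
def conjAlgHom (W : Mat k) (hW : W ∈ unitary (Mat k)) : Mat k →ₐ[ℂ] Mat k where
  toFun A := W * A * star W
  map_one' := by
    show W * 1 * star W = 1
    rw [mul_one, (Unitary.mem_iff.mp hW).2]
  map_mul' A B := by
    show W * (A * B) * star W = W * A * star W * (W * B * star W)
    have h : star W * W = 1 := (Unitary.mem_iff.mp hW).1
    simp only [mul_assoc]
    rw [← mul_assoc (star W) W, h, one_mul]
  map_zero' := by
    show W * 0 * star W = 0
    rw [mul_zero, zero_mul]
  map_add' A B := by
    show W * (A + B) * star W = W * A * star W + W * B * star W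
    rw [mul_add, add_mul]
  commutes' c := by
    show W * (algebraMap ℂ (Mat k) c) * star W = algebraMap ℂ (Mat k) c
    rw [Algebra.algebraMap_eq_smul_one, mul_smul_comm, smul_mul_assoc, mul_one,
      (Unitary.mem_iff.mp hW).2]

theorem evalPoly_conj {ι : Type*} (P : StarPoly ι) (T : ι → Mat k) {W : Mat k}
    (hW : W ∈ unitary (Mat k)) :
    evalPoly P (fun i => W * T i * star W) = W * evalPoly P T * star W := by
  have hstar : ∀ M : Mat k, star (W * M * star W) = W * star M * star W := by
    intro M
    rw [star_mul, star_mul, star_star, mul_assoc]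
  have h : (FreeAlgebra.lift ℂ
        (Sum.elim (fun i => W * T i * star W) fun i => star (W * T i * star W)))
      = (conjAlgHom W hW).comp (FreeAlgebra.lift ℂ (Sum.elim T fun i => star (T i))) := by
    apply FreeAlgebra.hom_ext
    funext j
    rcases j with i | i <;>
      simp [conjAlgHom, FreeAlgebra.lift_ι_apply, hstar]
  calc evalPoly P (fun i => W * T i * star W)
      = (FreeAlgebra.lift ℂ
          (Sum.elim (fun i => W * T i * star W) fun i => star (W * T i * star W))) P := rfl
    _ = ((conjAlgHom W hW).comp (FreeAlgebra.lift ℂ (Sum.elim T fun i => star (T i)))) P := by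
          rw [h]
    _ = W * evalPoly P T * star W := rfl

end Conj

section Lip

/-- Uniform bound and Lipschitz estimate (in normalized HS norm) for free-algebra
evaluations on operator-norm-bounded tuples. -/
theorem lift_bound {σ : Type*} [Fintype σ] (R : ℝ) (hR : 0 ≤ R) (P : FreeAlgebra ℂ σ) :
    ∃ C : ℝ, 0 ≤ C ∧ ∀ (k : ℕ) (f g : σ → Mat k), (∀ j, opNorm (f j) ≤ R) →
      (∀ j, opNorm (g j) ≤ R) →
      opNorm (FreeAlgebra.lift ℂ f P) ≤ C ∧
      hsNorm (FreeAlgebra.lift ℂ f P - FreeAlgebra.lift ℂ g P)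
        ≤ C * ∑ j, hsNorm (f j - g j) := by
  induction P using FreeAlgebra.induction with
  | grade0 c =>
    refine ⟨‖c‖, norm_nonneg c, fun k f g hf hg => ?_⟩
    constructor
    · rw [AlgHom.commutes]
      exact opNorm_algebraMap_le c
    · rw [AlgHom.commutes, AlgHom.commutes, sub_self, hsNorm_zero]
      exact mul_nonneg (norm_nonneg c) (Finset.sum_nonneg fun j _ => hsNorm_nonneg _)
  | grade1 j0 =>
    refine ⟨max R 1, le_max_of_le_left hR, fun k f g hf hg => ?_⟩
    constructor
    · rw [FreeAlgebra.lift_ι_apply]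
      exact le_trans (hf j0) (le_max_left R 1)
    · rw [FreeAlgebra.lift_ι_apply, FreeAlgebra.lift_ι_apply]
      calc hsNorm (f j0 - g j0) ≤ ∑ j, hsNorm (f j - g j) :=
            Finset.single_le_sum (f := fun j => hsNorm (f j - g j))
              (fun j _ => hsNorm_nonneg _) (Finset.mem_univ j0)
        _ = 1 * ∑ j, hsNorm (f j - g j) := (one_mul _).symm
        _ ≤ max R 1 * ∑ j, hsNorm (f j - g j) :=
            mul_le_mul_of_nonneg_right (le_max_right R 1)
              (Finset.sum_nonneg fun j _ => hsNorm_nonneg _)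
  | mul P Q hP hQ =>
    obtain ⟨C₁, hC₁, H₁⟩ := hP
    obtain ⟨C₂, hC₂, H₂⟩ := hQ
    refine ⟨2 * C₁ * C₂ + C₁ * C₂, by positivity, fun k f g hf hg => ?_⟩
    obtain ⟨hb₁f, hd₁⟩ := H₁ k f g hf hg
    obtain ⟨hb₂f, hd₂⟩ := H₂ k f g hf hg
    obtain ⟨hb₁g, _⟩ := H₁ k g g hg hg
    obtain ⟨hb₂g, _⟩ := H₂ k g g hg hg
    have hsum : 0 ≤ ∑ j, hsNorm (f j - g j) := Finset.sum_nonneg fun j _ => hsNorm_nonneg _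
    rw [map_mul, map_mul]
    constructor
    · calc opNorm (FreeAlgebra.lift ℂ f P * FreeAlgebra.lift ℂ f Q)
          ≤ opNorm (FreeAlgebra.lift ℂ f P) * opNorm (FreeAlgebra.lift ℂ f Q) :=
            opNorm_mul_le _ _
        _ ≤ C₁ * C₂ := mul_le_mul hb₁f hb₂f (opNorm_nonneg _) hC₁
        _ ≤ 2 * C₁ * C₂ + C₁ * C₂ := by nlinarith [mul_nonneg hC₁ hC₂]
    · have hdecomp : FreeAlgebra.lift ℂ f P * FreeAlgebra.lift ℂ f Q
          - FreeAlgebra.lift ℂ g P * FreeAlgebra.lift ℂ g Q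
          = FreeAlgebra.lift ℂ f P * (FreeAlgebra.lift ℂ f Q - FreeAlgebra.lift ℂ g Q)
            + (FreeAlgebra.lift ℂ f P - FreeAlgebra.lift ℂ g P) * FreeAlgebra.lift ℂ g Q := by
        noncomm_ring
      rw [hdecomp]
      calc hsNorm (FreeAlgebra.lift ℂ f P * (FreeAlgebra.lift ℂ f Q - FreeAlgebra.lift ℂ g Q)
            + (FreeAlgebra.lift ℂ f P - FreeAlgebra.lift ℂ g P) * FreeAlgebra.lift ℂ g Q)
          ≤ hsNorm (FreeAlgebra.lift ℂ f P * (FreeAlgebra.lift ℂ f Q - FreeAlgebra.lift ℂ g Q))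
            + hsNorm ((FreeAlgebra.lift ℂ f P - FreeAlgebra.lift ℂ g P)
              * FreeAlgebra.lift ℂ g Q) := hsNorm_add_le _ _
        _ ≤ opNorm (FreeAlgebra.lift ℂ f P)
              * hsNorm (FreeAlgebra.lift ℂ f Q - FreeAlgebra.lift ℂ g Q)
            + hsNorm (FreeAlgebra.lift ℂ f P - FreeAlgebra.lift ℂ g P)
              * opNorm (FreeAlgebra.lift ℂ g Q) :=
            add_le_add (hsNorm_mul_le_left _ _) (hsNorm_mul_le_right _ _)
        _ ≤ C₁ * (C₂ * ∑ j, hsNorm (f j - g j)) + (C₁ * ∑ j, hsNorm (f j - g j)) * C₂ := by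
            refine add_le_add ?_ ?_
            · exact mul_le_mul hb₁f hd₂ (hsNorm_nonneg _) hC₁
            · exact mul_le_mul hd₁ hb₂g (opNorm_nonneg _)
                (mul_nonneg hC₁ hsum)
        _ = (2 * C₁ * C₂) * ∑ j, hsNorm (f j - g j) := by ring
        _ ≤ (2 * C₁ * C₂ + C₁ * C₂) * ∑ j, hsNorm (f j - g j) := by
            nlinarith [mul_nonneg (mul_nonneg hC₁ hC₂) hsum]
  | add P Q hP hQ =>
    obtain ⟨C₁, hC₁, H₁⟩ := hP
    obtain ⟨C₂, hC₂, H₂⟩ := hQ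
    refine ⟨C₁ + C₂, by positivity, fun k f g hf hg => ?_⟩
    obtain ⟨hb₁, hd₁⟩ := H₁ k f g hf hg
    obtain ⟨hb₂, hd₂⟩ := H₂ k f g hf hg
    rw [map_add, map_add]
    constructor
    · exact le_trans (opNorm_add_le _ _) (add_le_add hb₁ hb₂)
    · have : FreeAlgebra.lift ℂ f P + FreeAlgebra.lift ℂ f Q
          - (FreeAlgebra.lift ℂ g P + FreeAlgebra.lift ℂ g Q)
          = (FreeAlgebra.lift ℂ f P - FreeAlgebra.lift ℂ g P)
            + (FreeAlgebra.lift ℂ f Q - FreeAlgebra.lift ℂ g Q) := by abel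
      rw [this, add_mul]
      exact le_trans (hsNorm_add_le _ _) (add_le_add hd₁ hd₂)

/-- Lipschitz estimate for `evalPoly` on bounded tuples, in terms of `tupleHS`. -/
theorem evalPoly_lip {ι : Type*} [Fintype ι] (R : ℝ) (hR : 0 ≤ R) (P : StarPoly ι) :
    ∃ C : ℝ, 0 ≤ C ∧ ∀ (k : ℕ) (T S : ι → Mat k), (∀ i, opNorm (T i) ≤ R) →
      (∀ i, opNorm (S i) ≤ R) →
      hsNorm (evalPoly P T - evalPoly P S) ≤ C * tupleHS (fun i => T i - S i) := by
  obtain ⟨C, hC, H⟩ := lift_bound R hR P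
  refine ⟨C * (2 * Fintype.card ι), by positivity, fun k T S hT hS => ?_⟩
  have hfT : ∀ j : ι ⊕ ι, opNorm ((Sum.elim T fun i => star (T i)) j) ≤ R := by
    intro j; rcases j with i | i
    · exact hT i
    · simpa [opNorm_star] using hT i
  have hfS : ∀ j : ι ⊕ ι, opNorm ((Sum.elim S fun i => star (S i)) j) ≤ R := by
    intro j; rcases j with i | i
    · exact hS i
    · simpa [opNorm_star] using hS i
  obtain ⟨_, hd⟩ := H k _ _ hfT hfS
  have hsum : ∑ j : ι ⊕ ι, hsNorm ((Sum.elim T fun i => star (T i)) j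
      - (Sum.elim S fun i => star (S i)) j) ≤ (2 * Fintype.card ι) * tupleHS (fun i => T i - S i) := by
    rw [Fintype.sum_sum_type]
    have h1 : ∀ i : ι, hsNorm (T i - S i) ≤ tupleHS (fun i => T i - S i) := fun i =>
      hsNorm_le_tupleHS (fun i => T i - S i) i
    have h2 : ∀ i : ι, hsNorm (star (T i) - star (S i)) ≤ tupleHS (fun i => T i - S i) := by
      intro i
      rw [← star_sub, hsNorm_star]
      exact h1 i
    calc (∑ i, hsNorm ((Sum.elim T fun i => star (T i)) (Sum.inl i)
            - (Sum.elim S fun i => star (S i)) (Sum.inl i)))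
          + ∑ i, hsNorm ((Sum.elim T fun i => star (T i)) (Sum.inr i)
            - (Sum.elim S fun i => star (S i)) (Sum.inr i))
        = (∑ i, hsNorm (T i - S i)) + ∑ i, hsNorm (star (T i) - star (S i)) := rfl
      _ ≤ (∑ i : ι, tupleHS (fun i => T i - S i)) + ∑ i : ι, tupleHS (fun i => T i - S i) :=
          add_le_add (Finset.sum_le_sum fun i _ => h1 i) (Finset.sum_le_sum fun i _ => h2 i)
      _ = (2 * Fintype.card ι) * tupleHS (fun i => T i - S i) := by
          simp only [Finset.sum_const, Finset.card_univ, nsmul_eq_mul]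
          ring
  calc hsNorm (evalPoly P T - evalPoly P S)
      ≤ C * ∑ j : ι ⊕ ι, hsNorm ((Sum.elim T fun i => star (T i)) j
          - (Sum.elim S fun i => star (S i)) j) := hd
    _ ≤ C * ((2 * Fintype.card ι) * tupleHS (fun i => T i - S i)) :=
        mul_le_mul_of_nonneg_left hsum hC
    _ = C * (2 * Fintype.card ι) * tupleHS (fun i => T i - S i) := by ring

end Lip


-- elog lemmas
theorem elog_nonneg (n : ℕ∞) : 0 ≤ elog n := by
  induction n using WithTop.recTopCoe with
  | top => exact le_top
  | coe m =>
    show (0 : EReal) ≤ ((Real.log m : ℝ) : EReal)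
    exact EReal.coe_nonneg.mpr (Real.log_natCast_nonneg m)

theorem elog_mono {a b : ℕ∞} (h : a ≤ b) : elog a ≤ elog b := by
  induction b using WithTop.recTopCoe with
  | top => exact le_top
  | coe m =>
    induction a using WithTop.recTopCoe with
    | top => exact absurd h (WithTop.not_top_le_coe _)
    | coe l =>
      have hlm : l ≤ m := WithTop.coe_le_coe.mp h
      show ((Real.log l : ℝ) : EReal) ≤ ((Real.log m : ℝ) : EReal)
      rw [EReal.coe_le_coe_iff]
      rcases Nat.eq_zero_or_pos l with hl | hl
      · rw [hl]
        simpa using Real.log_natCast_nonneg m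
      · exact Real.log_le_log (by exact_mod_cast hl) (by exact_mod_cast hlm)

-- the covering-number transfer lemma
theorem o2_transfer {ι κ : Type*} [Fintype ι] [Fintype κ] {k : ℕ}
    (S' : Set (ι → Mat k)) (Γ : Set (κ → Mat k)) (q : (κ → Mat k) → (ι → Mat k))
    (R L θ ω ω₁ : ℝ)
    (hθ : 0 ≤ θ) (hL : 0 ≤ L)
    (harith : 2 * θ + L * (2 * ω₁) < ω)
    (hΓR : ∀ T ∈ Γ, ∀ j, opNorm (T j) ≤ R)
    (hrel : ∀ S ∈ S', ∃ T ∈ Γ, tupleHS (fun i => S i - q T i) ≤ θ)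
    (hconj : ∀ (W : Mat k), W ∈ unitary (Mat k) → ∀ T : κ → Mat k,
      q (fun j => W * T j * star W) = fun i => W * q T i * star W)
    (hlip : ∀ T U : κ → Mat k, (∀ j, opNorm (T j) ≤ R) → (∀ j, opNorm (U j) ≤ R) →
      tupleHS (fun i => q T i - q U i) ≤ L * tupleHS (fun j => T j - U j)) :
    o2 S' ω ≤ o2 Γ ω₁ := by
  classical
  apply le_sInf
  rintro b ⟨F, hFsub, hFcov, rfl⟩
  set pred : (κ → Mat k) → Prop := fun B => ∃ S, S ∈ S' ∧ ∃ T, T ∈ Γ ∧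
    tupleHS (fun i => S i - q T i) ≤ θ ∧ T ∈ orbitBall B ω₁ with hpreddef
  set sel : (κ → Mat k) → (ι → Mat k) :=
    fun B => if h : pred B then h.choose else fun _ => 0 with hseldef
  set F' : Finset (ι → Mat k) := (F.filter pred).image sel with hF'def
  have hsel : ∀ B, (h : pred B) → sel B = h.choose := by
    intro B h
    simp only [hseldef, dif_pos h]
  have hselspec : ∀ B, (h : pred B) → sel B ∈ S' ∧ ∃ T, T ∈ Γ ∧
      tupleHS (fun i => sel B i - q T i) ≤ θ ∧ T ∈ orbitBall B ω₁ := by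
    intro B h
    rw [hsel B h]
    exact ⟨h.choose_spec.1, h.choose_spec.2⟩
  have hF'sub : ↑F' ⊆ S' := by
    intro S hS
    simp only [hF'def, Finset.coe_image, Set.mem_image, Finset.mem_coe,
      Finset.mem_filter] at hS
    obtain ⟨B, ⟨hBF, hBpred⟩, rfl⟩ := hS
    exact (hselspec B hBpred).1
  have hF'cov : S' ⊆ ⋃ C ∈ F', orbitBall C ω := by
    intro S hS
    obtain ⟨T, hTΓ, happrox⟩ := hrel S hS
    have hT := hFcov hTΓ
    simp only [Set.mem_iUnion] at hT
    obtain ⟨B, hBF, hTball⟩ := hT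
    have hBpred : pred B := ⟨S, hS, T, hTΓ, happrox, hTball⟩
    have hselmem : sel B ∈ F' :=
      Finset.mem_image_of_mem sel (Finset.mem_filter.mpr ⟨hBF, hBpred⟩)
    obtain ⟨hScS', Tc, hTcΓ, happroxc, hTcball⟩ := hselspec B hBpred
    set Sc := sel B
    obtain ⟨W, hW, hTW⟩ := hTball
    obtain ⟨W', hW', hTcW'⟩ := hTcball
    set V := W * star W' with hVdef
    have hV : V ∈ unitary (Mat k) := mul_mem hW (Unitary.star_mem hW')
    have hstarV : star V = W' * star W := by rw [hVdef, star_mul, star_star]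
    have hW'1 : star W' * W' = 1 := (Unitary.mem_iff.mp hW').1
    -- distance between T and the conjugated Tc
    have key1 : ∀ j, T j - V * Tc j * star V
        = (T j - W * B j * star W) + (V * (W' * B j * star W' - Tc j) * star V) := by
      intro j
      have h1 : V * (W' * B j * star W') * star V = W * B j * star W := by
        rw [hVdef, hstarV]
        simp only [mul_assoc]
        rw [← mul_assoc (star W') W', hW'1, one_mul, ← mul_assoc (star W') W', hW'1, one_mul]
      have h2 : V * (W' * B j * star W' - Tc j) * star V
          = V * (W' * B j * star W') * star V - V * Tc j * star V := by
        rw [mul_sub, sub_mul]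
      rw [h2, h1]
      abel
    have step1 : tupleHS (fun j => T j - V * Tc j * star V) ≤ ω₁ + ω₁ := by
      calc tupleHS (fun j => T j - V * Tc j * star V)
          = tupleHS (fun j => (T j - W * B j * star W)
              + (V * (W' * B j * star W' - Tc j) * star V)) := tupleHS_congr _ _ key1
        _ ≤ tupleHS (fun j => T j - W * B j * star W)
            + tupleHS (fun j => V * (W' * B j * star W' - Tc j) * star V) :=
            tupleHS_add_le _ _
        _ = tupleHS (fun j => T j - W * B j * star W)
            + tupleHS (fun j => W' * B j * star W' - Tc j) := by rw [tupleHS_conj hV]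
        _ = tupleHS (fun j => T j - W * B j * star W)
            + tupleHS (fun j => Tc j - W' * B j * star W') := by
            have hswap : tupleHS (fun j => W' * B j * star W' - Tc j)
                = tupleHS (fun j => Tc j - W' * B j * star W') := by
              rw [← tupleHS_neg (fun j => Tc j - W' * B j * star W')]
              exact tupleHS_congr (fun j => W' * B j * star W' - Tc j)
                (fun j => -(Tc j - W' * B j * star W')) (fun j => (neg_sub _ _).symm)
            rw [hswap]
        _ ≤ ω₁ + ω₁ := add_le_add hTW.le hTcW'.le
    -- now bound the distance between S and conjugated Sc
    have hqconj : q (fun j => V * Tc j * star V) = fun i => V * q Tc i * star V :=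
      hconj V hV Tc
    have key2 : ∀ i, S i - V * Sc i * star V
        = (S i - q T i) + ((q T i - q (fun j => V * Tc j * star V) i)
          + (V * (q Tc i - Sc i) * star V)) := by
      intro i
      rw [hqconj]
      have : V * (q Tc i - Sc i) * star V = V * q Tc i * star V - V * Sc i * star V := by
        rw [mul_sub, sub_mul]
      rw [this]
      abel
    have hTR : ∀ j, opNorm (T j) ≤ R := hΓR T hTΓ
    have hTcR : ∀ j, opNorm (V * Tc j * star V) ≤ R := fun j =>
      le_trans (opNorm_conj_le hV (Tc j)) (hΓR Tc hTcΓ j)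
    have step2 : tupleHS (fun i => S i - V * Sc i * star V) < ω := by
      calc tupleHS (fun i => S i - V * Sc i * star V)
          = tupleHS (fun i => (S i - q T i) + ((q T i - q (fun j => V * Tc j * star V) i)
              + (V * (q Tc i - Sc i) * star V))) := tupleHS_congr _ _ key2
        _ ≤ tupleHS (fun i => S i - q T i)
            + tupleHS (fun i => (q T i - q (fun j => V * Tc j * star V) i)
              + (V * (q Tc i - Sc i) * star V)) := tupleHS_add_le _ _
        _ ≤ tupleHS (fun i => S i - q T i)
            + (tupleHS (fun i => q T i - q (fun j => V * Tc j * star V) i)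
              + tupleHS (fun i => V * (q Tc i - Sc i) * star V)) := by
            exact add_le_add le_rfl (tupleHS_add_le _ _)
        _ ≤ θ + (L * (ω₁ + ω₁) + θ) := by
            refine add_le_add happrox (add_le_add ?_ ?_)
            · calc tupleHS (fun i => q T i - q (fun j => V * Tc j * star V) i)
                  ≤ L * tupleHS (fun j => T j - V * Tc j * star V) :=
                    hlip T _ hTR hTcR
                _ ≤ L * (ω₁ + ω₁) := mul_le_mul_of_nonneg_left step1 hL
            · calc tupleHS (fun i => V * (q Tc i - Sc i) * star V)
                  = tupleHS (fun i => q Tc i - Sc i) := tupleHS_conj hV _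
                _ = tupleHS (fun i => Sc i - q Tc i) := by
                    rw [← tupleHS_neg (fun i => Sc i - q Tc i)]
                    exact tupleHS_congr (fun i => q Tc i - Sc i)
                      (fun i => -(Sc i - q Tc i)) (fun i => (neg_sub _ _).symm)
                _ ≤ θ := happroxc
        _ < ω := by linarith
    refine Set.mem_iUnion.mpr ⟨Sc, Set.mem_iUnion.mpr ⟨hselmem, ⟨V, hV, step2⟩⟩⟩
  calc o2 S' ω ≤ (F'.card : ℕ∞) := sInf_le ⟨F', hF'sub, hF'cov, rfl⟩
    _ ≤ (F.card : ℕ∞) := by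
        have := le_trans (Finset.card_image_le (f := sel) (s := F.filter pred))
          (Finset.card_filter_le F pred)
        exact_mod_cast this


-- approximation by *-polynomials in the generators
section Approx
variable {A : Type*} [CStarAlgebra A]

theorem reim_add_smul {ι : Type*} (x : ι → A) (i : ι) :
    reim x (Sum.inl i) + Complex.I • reim x (Sum.inr i) = x i := by
  show (2⁻¹ : ℂ) • (x i + star (x i))
      + Complex.I • (((2 * Complex.I)⁻¹ : ℂ) • (x i - star (x i))) = x i
  rw [smul_smul]
  have hI : Complex.I * (2 * Complex.I)⁻¹ = 2⁻¹ := by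
    field_simp
  rw [hI]
  module

theorem reim_sub_smul {ι : Type*} (x : ι → A) (i : ι) :
    reim x (Sum.inl i) - Complex.I • reim x (Sum.inr i) = star (x i) := by
  show (2⁻¹ : ℂ) • (x i + star (x i))
      - Complex.I • (((2 * Complex.I)⁻¹ : ℂ) • (x i - star (x i))) = star (x i)
  rw [smul_smul]
  have hI : Complex.I * (2 * Complex.I)⁻¹ = 2⁻¹ := by
    field_simp
  rw [hI]
  module

theorem mem_adjoin_poly {ι : Type*} (x : ι → A) (b : A)
    (hb' : b ∈ Algebra.adjoin ℂ (Set.range x ∪ star (Set.range x))) :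
    ∃ Q : StarPoly (ι ⊕ ι), evalPoly Q (reim x) = b := by
  induction hb' using Algebra.adjoin_induction with
  | mem b hbmem =>
    rcases hbmem with hbr | hbs
    · obtain ⟨i, rfl⟩ := hbr
      refine ⟨FreeAlgebra.ι ℂ (Sum.inl (Sum.inl i))
        + Complex.I • FreeAlgebra.ι ℂ (Sum.inl (Sum.inr i)), ?_⟩
      rw [evalPoly_add, evalPoly_smul, evalPoly_ι_left, evalPoly_ι_left]
      exact reim_add_smul x i
    · have hsb : star b ∈ Set.range x := hbs
      obtain ⟨i, hi⟩ := hsb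
      have hbi : b = star (x i) := by rw [hi, star_star]
      refine ⟨FreeAlgebra.ι ℂ (Sum.inl (Sum.inl i))
        - Complex.I • FreeAlgebra.ι ℂ (Sum.inl (Sum.inr i)), ?_⟩
      rw [evalPoly_sub, evalPoly_smul, evalPoly_ι_left, evalPoly_ι_left, hbi]
      exact reim_sub_smul x i
  | algebraMap c => exact ⟨algebraMap ℂ _ c, evalPoly_algebraMap c _⟩
  | add b c hbmem hcmem ihb ihc =>
    obtain ⟨Qb, hQb⟩ := ihb
    obtain ⟨Qc, hQc⟩ := ihc
    exact ⟨Qb + Qc, by rw [evalPoly_add, hQb, hQc]⟩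
  | mul b c hbmem hcmem ihb ihc =>
    obtain ⟨Qb, hQb⟩ := ihb
    obtain ⟨Qc, hQc⟩ := ihc
    exact ⟨Qb * Qc, by rw [evalPoly_mul, hQb, hQc]⟩

theorem exists_poly_approx {ι : Type*} {x : ι → A}
    (hgen : cstar (Set.range x) = ⊤) (a : A) {δ : ℝ} (hδ : 0 < δ) :
    ∃ Q : StarPoly (ι ⊕ ι), ‖a - evalPoly Q (reim x)‖ < δ := by
  have hmem : a ∈ closure ((StarAlgebra.adjoin ℂ (Set.range x) : StarSubalgebra ℂ A) : Set A) := by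
    have h1 : a ∈ cstar (Set.range x) := by rw [hgen]; exact StarSubalgebra.mem_top
    exact h1
  rw [Metric.mem_closure_iff] at hmem
  obtain ⟨b, hb, hdist⟩ := hmem δ hδ
  have hb' : b ∈ Algebra.adjoin ℂ (Set.range x ∪ star (Set.range x)) := by
    rw [← StarAlgebra.adjoin_toSubalgebra]
    exact hb
  obtain ⟨Q, hQ⟩ := mem_adjoin_poly x b hb'
  refine ⟨Q, ?_⟩
  rw [hQ, ← dist_eq_norm]
  exact hdist

end Approx

section Main
variable {A : Type*} [CStarAlgebra A]

theorem limsup_term_nonneg {ι κ : Type*} [Fintype ι] [Fintype κ] (x : ι → A) (y : κ → A)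
    (ω R ε : ℝ) (r : ℕ) (P : Fin r → StarPoly (ι ⊕ κ)) :
    (0 : EReal) ≤ limsup (fun k : ℕ =>
      elog (o2 (GammaRel x y R k ε P) ω) * ((((k : ℝ) ^ 2)⁻¹ : ℝ) : EReal)) atTop := by
  have h0 : ∀ k : ℕ, (0 : EReal)
      ≤ elog (o2 (GammaRel x y R k ε P) ω) * ((((k : ℝ) ^ 2)⁻¹ : ℝ) : EReal) := by
    intro k
    calc (0 : EReal) = 0 * ((((k : ℝ) ^ 2)⁻¹ : ℝ) : EReal) := (zero_mul _).symm
      _ ≤ _ := mul_le_mul_of_nonneg_right (elog_nonneg _)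
          (EReal.coe_nonneg.mpr (by positivity))
  calc (0 : EReal) = limsup (fun _ : ℕ => (0 : EReal)) atTop := (limsup_const 0).symm
    _ ≤ _ := limsup_le_limsup (Eventually.of_forall h0)

theorem Ktop2sa_nonneg {ι κ : Type*} [Fintype ι] [Fintype κ] (x : ι → A) (y : κ → A) :
    (0 : EReal) ≤ Ktop2sa x y := by
  unfold Ktop2sa
  have hterm : (0 : EReal) ≤ ⨅ (ε : ℝ) (_ : 0 < ε) (r : ℕ) (P : Fin r → StarPoly (ι ⊕ κ)),
      limsup (fun k : ℕ =>
        elog (o2 (GammaRel x y (1 : ℝ) k ε P) 1) * ((((k : ℝ) ^ 2)⁻¹ : ℝ) : EReal)) atTop :=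
    le_iInf fun ε => le_iInf fun _ => le_iInf fun r => le_iInf fun P =>
      limsup_term_nonneg x y 1 1 ε r P
  exact le_trans hterm (le_iSup_of_le (1 : ℝ) (le_iSup_of_le (one_pos : (0:ℝ) < 1)
    (le_iSup_of_le (1 : ℝ) (le_iSup_of_le (one_pos : (0:ℝ) < 1) le_rfl))))

theorem Ktop2_eq_zero {n n' : ℕ} (x : Fin n → A) (x' : Fin n' → A)
    (hgen : cstar (Set.range x) = ⊤)
    (h : Ktop2 x (Fin.elim0 : Fin 0 → A) = 0) :
    Ktop2 x' x = 0 := by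
  refine le_antisymm ?_ (Ktop2sa_nonneg _ _)
  show Ktop2sa (reim x') (reim x) ≤ 0
  unfold Ktop2sa
  refine iSup_le fun ω => iSup_le fun hω => iSup_le fun R => iSup_le fun hR => ?_
  by_contra hc
  rw [not_le] at hc
  set N' : ℝ := (Fintype.card (Fin n' ⊕ Fin n') : ℝ) with hN'def
  have hN' : 0 ≤ N' := Nat.cast_nonneg _
  set δ : ℝ := ω / (8 * (N' + 1)) with hδdef
  have hδ : 0 < δ := div_pos hω (by positivity)
  choose Q hQ using fun i : Fin n' ⊕ Fin n' => exists_poly_approx hgen (reim x' i) hδ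
  choose C hC0 hClip using fun i : Fin n' ⊕ Fin n' => evalPoly_lip R hR.le (Q i)
  set L : ℝ := ∑ i, C i with hLdef
  have hL : 0 ≤ L := Finset.sum_nonneg fun i _ => hC0 i
  set ω₁ : ℝ := ω / (8 * (L + 1)) with hω₁def
  have hω₁ : 0 < ω₁ := div_pos hω (by positivity)
  set θ : ℝ := N' * (2 * δ) with hθdef
  have hθ : 0 ≤ θ := by positivity
  have harith : 2 * θ + L * (2 * ω₁) < ω := by
    have hδ8 : δ * (8 * (N' + 1)) = ω := div_mul_cancel₀ ω (by positivity)
    have hω₁8 : ω₁ * (8 * (L + 1)) = ω := div_mul_cancel₀ ω (by positivity)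
    nlinarith [mul_nonneg hN' hδ.le, mul_nonneg hL hω₁.le, hδ.le, hω₁.le, hω]
  -- extract a good family of polynomials from the hypothesis
  have hhyp : (⨅ (ε : ℝ) (_ : 0 < ε) (r : ℕ)
      (P : Fin r → StarPoly ((Fin n ⊕ Fin n) ⊕ (Fin 0 ⊕ Fin 0))),
      limsup (fun k : ℕ =>
        elog (o2 (GammaRel (reim x) (reim (Fin.elim0 : Fin 0 → A)) R k ε P) ω₁)
          * ((((k : ℝ) ^ 2)⁻¹ : ℝ) : EReal)) atTop) ≤ 0 := by
    rw [← h]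
    show _ ≤ Ktop2sa (reim x) (reim (Fin.elim0 : Fin 0 → A))
    unfold Ktop2sa
    exact le_iSup_of_le ω₁ (le_iSup_of_le hω₁ (le_iSup_of_le R (le_iSup_of_le hR le_rfl)))
  have hlt := lt_of_le_of_lt hhyp hc
  rw [iInf_lt_iff] at hlt
  obtain ⟨ε', hlt⟩ := hlt
  rw [iInf_lt_iff] at hlt
  obtain ⟨hε', hlt⟩ := hlt
  rw [iInf_lt_iff] at hlt
  obtain ⟨r', hlt⟩ := hlt
  rw [iInf_lt_iff] at hlt
  obtain ⟨P'', hlt⟩ := hlt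
  -- build the joint polynomial family
  set ε : ℝ := min δ ε' with hεdef
  have hε : 0 < ε := lt_min hδ hε'
  set collmap : (Fin n ⊕ Fin n) ⊕ (Fin 0 ⊕ Fin 0) → (Fin n ⊕ Fin n) :=
    Sum.elim id (Sum.elim Fin.elim0 Fin.elim0) with hcolldef
  set P₀ : (Fin r' ⊕ (Fin n' ⊕ Fin n'))
      → StarPoly ((Fin n' ⊕ Fin n') ⊕ (Fin n ⊕ Fin n)) :=
    Sum.elim (fun j => ren Sum.inr (ren collmap (P'' j)))
      (fun i => FreeAlgebra.ι ℂ (Sum.inl (Sum.inl i)) - ren Sum.inr (Q i)) with hP₀def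
  set e : (Fin r' ⊕ (Fin n' ⊕ Fin n')) ≃ Fin (r' + (n' + n')) :=
    (Equiv.sumCongr (Equiv.refl (Fin r')) finSumFinEquiv).trans finSumFinEquiv with hedef
  set P : Fin (r' + (n' + n')) → StarPoly ((Fin n' ⊕ Fin n') ⊕ (Fin n ⊕ Fin n)) :=
    fun j => P₀ (e.symm j) with hPdef
  -- covering-number comparison at each matrix size
  have hcover : ∀ k : ℕ, o2 (GammaRel (reim x') (reim x) R k ε P) ω
      ≤ o2 (GammaRel (reim x) (reim (Fin.elim0 : Fin 0 → A)) R k ε' P'') ω₁ := by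
    intro k
    apply o2_transfer _ _ (fun T i => evalPoly (Q i) T) R L θ ω ω₁ hθ hL harith
    · -- hΓR
      rintro T ⟨V, hV, rfl⟩ j
      exact hV.2.1 (Sum.inl j)
    · -- hrel
      rintro S ⟨U, hU, rfl⟩
      obtain ⟨hUsa, hUnorm, hUpoly⟩ := hU
      refine ⟨U ∘ Sum.inr, ?_, ?_⟩
      · refine ⟨fun z => U (Sum.inr (collmap z)), ⟨?_, ?_, ?_⟩, rfl⟩
        · rintro (c | (a | a))
          · exact hUsa (Sum.inr c)
          · exact a.elim0
          · exact a.elim0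
        · rintro (c | (a | a))
          · exact hUnorm (Sum.inr c)
          · exact a.elim0
          · exact a.elim0
        · intro j
          have hcond := hUpoly (e (Sum.inl j))
          have hPe : P (e (Sum.inl j)) = ren Sum.inr (ren collmap (P'' j)) := by
            rw [hPdef]
            simp [hP₀def]
          rw [hPe] at hcond
          have h1 : evalPoly (ren Sum.inr (ren collmap (P'' j))) U
              = evalPoly (P'' j) ((U ∘ Sum.inr) ∘ collmap) := by
            rw [evalPoly_ren, evalPoly_ren]
          have h2 : evalPoly (ren Sum.inr (ren collmap (P'' j)))
                (Sum.elim (reim x') (reim x))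
              = evalPoly (P'' j) (Sum.elim (reim x) (reim (Fin.elim0 : Fin 0 → A))) := by
            rw [evalPoly_ren, evalPoly_ren]
            congr 1
            funext z
            rcases z with c | (a | a)
            · rfl
            · exact a.elim0
            · exact a.elim0
          rw [h1, h2] at hcond
          exact le_trans hcond (min_le_right δ ε')
      · -- approximation bound
        have hbound : ∀ i : Fin n' ⊕ Fin n',
            hsNorm ((U ∘ Sum.inl) i - evalPoly (Q i) (U ∘ Sum.inr)) ≤ 2 * δ := by
          intro i
          have hcond := hUpoly (e (Sum.inr i))
          have hPe : P (e (Sum.inr i))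
              = FreeAlgebra.ι ℂ (Sum.inl (Sum.inl i)) - ren Sum.inr (Q i) := by
            rw [hPdef]
            simp [hP₀def]
          rw [hPe, evalPoly_sub, evalPoly_sub, evalPoly_ren, evalPoly_ren,
            evalPoly_ι_left, evalPoly_ι_left] at hcond
          have hA : ‖reim x' i - evalPoly (Q i) (reim x)‖ < δ := hQ i
          have hA' : ‖Sum.elim (reim x') (reim x) (Sum.inl i)
              - evalPoly (Q i) (Sum.elim (reim x') (reim x) ∘ Sum.inr)‖ < δ := hA
          have hop : opNorm (U (Sum.inl i) - evalPoly (Q i) (U ∘ Sum.inr))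
              ≤ ‖Sum.elim (reim x') (reim x) (Sum.inl i)
                - evalPoly (Q i) (Sum.elim (reim x') (reim x) ∘ Sum.inr)‖ + ε := by
            have h9 := (abs_le.mp hcond).2
            linarith
          have hεδ : ε ≤ δ := min_le_left δ ε'
          calc hsNorm ((U ∘ Sum.inl) i - evalPoly (Q i) (U ∘ Sum.inr))
              ≤ opNorm ((U ∘ Sum.inl) i - evalPoly (Q i) (U ∘ Sum.inr)) :=
                hsNorm_le_opNorm _
            _ ≤ ‖Sum.elim (reim x') (reim x) (Sum.inl i)
                - evalPoly (Q i) (Sum.elim (reim x') (reim x) ∘ Sum.inr)‖ + ε := hop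
            _ ≤ 2 * δ := by linarith [hA']
        calc tupleHS (fun i => (U ∘ Sum.inl) i - evalPoly (Q i) (U ∘ Sum.inr))
            ≤ ∑ i, hsNorm ((U ∘ Sum.inl) i - evalPoly (Q i) (U ∘ Sum.inr)) :=
              tupleHS_le_sum _
          _ ≤ ∑ _i : Fin n' ⊕ Fin n', (2 * δ) :=
              Finset.sum_le_sum fun i _ => hbound i
          _ = θ := by
              rw [Finset.sum_const, Finset.card_univ, nsmul_eq_mul, hθdef, hN'def]
    · -- hconj
      intro W hW T
      funext i
      exact evalPoly_conj (Q i) T hW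
    · -- hlip
      intro T U hT hU
      calc tupleHS (fun i => evalPoly (Q i) T - evalPoly (Q i) U)
          ≤ ∑ i, hsNorm (evalPoly (Q i) T - evalPoly (Q i) U) := tupleHS_le_sum _
        _ ≤ ∑ i, C i * tupleHS (fun j => T j - U j) :=
            Finset.sum_le_sum fun i _ => hClip i k T U hT hU
        _ = L * tupleHS (fun j => T j - U j) := by rw [← Finset.sum_mul]
  -- compare the limsups and derive a contradiction
  have hford : (⨅ (ε0 : ℝ) (_ : 0 < ε0) (r : ℕ)
      (P0 : Fin r → StarPoly ((Fin n' ⊕ Fin n') ⊕ (Fin n ⊕ Fin n))),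
      limsup (fun k : ℕ =>
        elog (o2 (GammaRel (reim x') (reim x) R k ε0 P0) ω)
          * ((((k : ℝ) ^ 2)⁻¹ : ℝ) : EReal)) atTop)
      ≤ limsup (fun k : ℕ =>
        elog (o2 (GammaRel (reim x') (reim x) R k ε P) ω)
          * ((((k : ℝ) ^ 2)⁻¹ : ℝ) : EReal)) atTop :=
    iInf_le_of_le ε (iInf_le_of_le hε (iInf_le_of_le (r' + (n' + n')) (iInf_le _ P)))
  have hlims : limsup (fun k : ℕ =>
        elog (o2 (GammaRel (reim x') (reim x) R k ε P) ω)
          * ((((k : ℝ) ^ 2)⁻¹ : ℝ) : EReal)) atTop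
      ≤ limsup (fun k : ℕ =>
        elog (o2 (GammaRel (reim x) (reim (Fin.elim0 : Fin 0 → A)) R k ε' P'') ω₁)
          * ((((k : ℝ) ^ 2)⁻¹ : ℝ) : EReal)) atTop :=
    limsup_le_limsup (Eventually.of_forall fun k =>
      mul_le_mul_of_nonneg_right (elog_mono (hcover k))
        (EReal.coe_nonneg.mpr (by positivity)))
  exact lt_irrefl _ (lt_of_le_of_lt (hford.trans hlims) hlt)

end Main

end OrbitDim

open OrbitDim Set

/-- If `A = C*(x₁,…,xₙ)` is a finitely generated unital MF C*-algebra
and `K_top^{(2)}(x₁,…,xₙ) = 0`, then `K_top^{(3)}(A) = 0`. -/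
theorem stmt6 {A : Type*} [CStarAlgebra A] (n : ℕ) (x : Fin n → A)
    (hgen : cstar (Set.range x) = ⊤) (hMF : IsMFTuple x)
    (h : Ktop2 x (Fin.elim0 : Fin 0 → A) = 0) :
    Ktop3 (Set.univ : Set A) = 0 := by
  have main : ∀ (n' : ℕ) (x' : Fin n' → A), Ktop2 x' x = 0 := fun n' x' =>
    Ktop2_eq_zero x x' hgen h
  have infMul_nonneg : ∀ z : EReal, (0 : EReal) ≤ infMul z := by
    intro z
    unfold infMul
    split
    · exact le_refl _
    · exact le_top
  refine le_antisymm ?_ ?_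
  · unfold Ktop3
    refine iSup_le fun n' => iSup_le fun x' => iSup_le fun _ => ?_
    calc (⨅ (t : ℕ) (y : Fin t → A) (_ : ∀ j, y j ∈ (Set.univ : Set A)),
          infMul (Ktop2 x' y))
        ≤ infMul (Ktop2 x' x) :=
          iInf_le_of_le n (iInf_le_of_le x (iInf_le _ fun j => Set.mem_univ _))
      _ = 0 := by rw [main n' x']; simp [infMul]
  · unfold Ktop3
    have h0 : (0 : EReal) ≤ ⨅ (t : ℕ) (y : Fin t → A)
        (_ : ∀ j, y j ∈ (Set.univ : Set A)),
        infMul (Ktop2 (Fin.elim0 : Fin 0 → A) y) :=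
      le_iInf fun t => le_iInf fun y => le_iInf fun _ => infMul_nonneg _
    exact le_trans h0 (le_iSup_of_le 0 (le_iSup_of_le (Fin.elim0 : Fin 0 → A)
      (le_iSup_of_le (fun i => Set.mem_univ _) le_rfl)))
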